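/- Let f : ℝ^m → ℝ^m be continuous, injective, and autoregressive with each component f_i strictly increasing in x_i. Then f is a homeomorphism onto its image, and its inverse g is also autoregressive (the i-th component of g(y) depends only on y₁,…,y_i). -/

import Mathlib

open Set Function

/-- If `f : ℝ^m → ℝ^m` is continuous, injective, and autoregressive with each
component strictly increasing in its own coordinate, then `f` is a
homeomorphism onto its image (range), and its inverse is also autoregressive:
the `i`-th component of the inverse depends only on coordinates `j ≤ i`. -/
theorem autoregressive_inverse_is_autoregressive
    {m : ℕ} (f : (Fin m → ℝ) → (Fin m → ℝ))
    (hcont : Continuous f) (hinj : Function.Injective f)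
    (hauto : ∀ (x y : Fin m → ℝ) (i : Fin m),
      (∀ j : Fin m, j ≤ i → x j = y j) → f x i = f y i)
    (hmono : ∀ (x : Fin m → ℝ) (i : Fin m),
      StrictMono (fun t : ℝ => f (Function.update x i t) i)) :
    ∃ h : (Fin m → ℝ) ≃ₜ Set.range f,
      (∀ x : Fin m → ℝ, (h x : Fin m → ℝ) = f x) ∧
      (∀ (y y' : Set.range f) (i : Fin m),
        (∀ j : Fin m, j ≤ i → (y : Fin m → ℝ) j = (y' : Fin m → ℝ) j) →
        h.symm y i = h.symm y' i) := by
  classical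
  set e : (Fin m → ℝ) ≃ Set.range f := Equiv.ofInjective f hinj with he
  set g : Set.range f → (Fin m → ℝ) := fun y => e.symm y with hg
  have hfg : ∀ y : Set.range f, f (g y) = (y : Fin m → ℝ) := by
    intro y
    have : e (e.symm y) = y := e.apply_symm_apply y
    have := congrArg Subtype.val this
    exact this
  -- Continuity of g, coordinate by coordinate, by strong induction on the coordinate.
  have key : ∀ n : ℕ, ∀ i : Fin m, (i : ℕ) = n →
      ∀ y : Set.range f, ContinuousAt (fun y' : Set.range f => g y' i) y := by
    intro n
    induction n using Nat.strong_induction_on with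
    | _ n IH =>
      intro i hi y
      have IH' : ∀ j : Fin m, j < i →
          ∀ y : Set.range f, ContinuousAt (fun y' : Set.range f => g y' j) y := by
        intro j hj
        have hjn : (j : ℕ) < n := hi ▸ Fin.lt_iff_val_lt_val.mp hj
        exact IH j hjn j rfl
      set x : Fin m → ℝ := g y with hx
      -- y' i tends to y i
      have hyv : Filter.Tendsto (fun y' : Set.range f => (y' : Fin m → ℝ) i)
          (nhds y) (nhds ((y : Fin m → ℝ) i)) :=
        ((continuous_apply i).comp continuous_subtype_val).continuousAt
      rw [ContinuousAt]
      rw [tendsto_order]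
      constructor
      · -- lower bound: for a < x i, eventually a < g y' i
        intro a ha
        have hlt : f (Function.update x i a) i < (y : Fin m → ℝ) i := by
          have := (hmono x i) ha
          simpa [Function.update_eq_self, hfg y, hx] using this
        -- auxiliary function
        set Z : Set.range f → (Fin m → ℝ) := fun y' =>
          fun j => if j = i then a else if j < i then g y' j else x j with hZ
        have hZtend : Filter.Tendsto Z (nhds y) (nhds (Function.update x i a)) := by
          rw [tendsto_pi_nhds]
          intro j
          by_cases hji : j = i
          · subst hji
            simp only [hZ, if_pos rfl, Function.update_self]
            exact tendsto_const_nhds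
          · by_cases hjlt : j < i
            · have := IH' j hjlt y
              simp only [hZ, if_neg hji, if_pos hjlt, Function.update_of_ne hji]
              exact this
            · simp only [hZ, if_neg hji, if_neg hjlt, Function.update_of_ne hji]
              exact tendsto_const_nhds
        have hfZ : Filter.Tendsto (fun y' => f (Z y') i) (nhds y)
            (nhds (f (Function.update x i a) i)) :=
          Filter.Tendsto.comp (((continuous_apply i).comp hcont).continuousAt) hZtend
        have hev : ∀ᶠ y' in nhds y, f (Z y') i < (y' : Fin m → ℝ) i :=
          hfZ.eventually_lt hyv hlt
        refine hev.mono ?_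
        intro y' hy'
        have hZa : f (Z y') i = f (Function.update (g y') i a) i := by
          apply hauto
          intro j hj
          by_cases hji : j = i
          · subst hji; simp [hZ]
          · have hjlt : j < i := lt_of_le_of_ne hj hji
            simp [hZ, hji, hjlt, Function.update_of_ne hji]
        have h1 : f (Function.update (g y') i a) i
            < f (Function.update (g y') i (g y' i)) i := by
          rw [Function.update_eq_self, hfg y', ← hZa]
          exact hy'
        exact (hmono (g y') i).lt_iff_lt.mp h1
      · -- upper bound
        intro b hb
        have hlt : (y : Fin m → ℝ) i < f (Function.update x i b) i := by
          have := (hmono x i) hb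
          simpa [Function.update_eq_self, hfg y, hx] using this
        set Z : Set.range f → (Fin m → ℝ) := fun y' =>
          fun j => if j = i then b else if j < i then g y' j else x j with hZ
        have hZtend : Filter.Tendsto Z (nhds y) (nhds (Function.update x i b)) := by
          rw [tendsto_pi_nhds]
          intro j
          by_cases hji : j = i
          · subst hji
            simp only [hZ, if_pos rfl, Function.update_self]
            exact tendsto_const_nhds
          · by_cases hjlt : j < i
            · have := IH' j hjlt y
              simp only [hZ, if_neg hji, if_pos hjlt, Function.update_of_ne hji]
              exact this
            · simp only [hZ, if_neg hji, if_neg hjlt, Function.update_of_ne hji]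
              exact tendsto_const_nhds
        have hfZ : Filter.Tendsto (fun y' => f (Z y') i) (nhds y)
            (nhds (f (Function.update x i b) i)) :=
          Filter.Tendsto.comp (((continuous_apply i).comp hcont).continuousAt) hZtend
        have hev : ∀ᶠ y' : Set.range f in nhds y, (y' : Fin m → ℝ) i < f (Z y') i :=
          hyv.eventually_lt hfZ hlt
        refine hev.mono ?_
        intro y' hy'
        have hZb : f (Z y') i = f (Function.update (g y') i b) i := by
          apply hauto
          intro j hj
          by_cases hji : j = i
          · subst hji; simp [hZ]
          · have hjlt : j < i := lt_of_le_of_ne hj hji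
            simp [hZ, hji, hjlt, Function.update_of_ne hji]
        have h1 : f (Function.update (g y') i (g y' i)) i
            < f (Function.update (g y') i b) i := by
          rw [Function.update_eq_self, hfg y', ← hZb]
          exact hy'
        exact (hmono (g y') i).lt_iff_lt.mp h1
  have hgcont : Continuous g := by
    apply continuous_pi
    intro i
    rw [continuous_iff_continuousAt]
    intro y
    exact key i i rfl y
  refine ⟨⟨e, ?_, hgcont⟩, ?_, ?_⟩
  · exact Continuous.subtype_mk hcont _
  · intro x
    rfl
  · -- autoregressivity of the inverse
    have main : ∀ n : ℕ, ∀ i : Fin m, (i : ℕ) = n →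
        ∀ y y' : Set.range f,
        (∀ j : Fin m, j ≤ i → (y : Fin m → ℝ) j = (y' : Fin m → ℝ) j) →
        g y i = g y' i := by
      intro n
      induction n using Nat.strong_induction_on with
      | _ n IH =>
        intro i hi y y' hagree
        have IH' : ∀ j : Fin m, j < i → g y j = g y' j := by
          intro j hj
          refine IH j (by simpa [hi] using (Fin.lt_iff_val_lt_val.mp hj)) j rfl y y' ?_
          intro k hk
          exact hagree k (le_trans hk (le_of_lt hj))
        have h1 : f (Function.update (g y) i (g y' i)) i = f (g y') i := by
          apply hauto
          intro j hj
          by_cases hji : j = i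
          · subst hji; simp
          · have hjlt : j < i := lt_of_le_of_ne hj hji
            rw [Function.update_of_ne hji]
            exact IH' j hjlt
        have h2 : f (Function.update (g y) i (g y i)) i
            = f (Function.update (g y) i (g y' i)) i := by
          rw [Function.update_eq_self, hfg y, h1, hfg y']
          exact hagree i le_rfl
        exact (hmono (g y) i).injective h2
    intro y y' i hagree
    exact main i i rfl y y' hagree
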